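/- Let M be a set, let I be an uncountable index set, and let (A_i)_{i ∈ I} be a family of subsets of M that is independent, i.e., for all finite disjoint I_0, I_1 ⊆ I, the set (⋂_{i ∈ I_0} A_i) ∩ (⋂_{j ∈ I_1} (M \ A_j)) is nonempty. Then there do not exist a linear order < on M and a function N : I → ℕ such that for every i ∈ I, the set A_i is a union of at most N(i) <-convex subsets of M. -/

import Mathlib

/-- `S` is convex with respect to the strict order `r`. -/
def IsRConvex {X : Type*} (r : X → X → Prop) (S : Set X) : Prop :=
  ∀ a b c : X, r a b → r b c → a ∈ S → c ∈ S → b ∈ S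

/-- `S` is a union of at most `K` `r`-convex subsets of `X`. -/
def UnionOfAtMostConvex {X : Type*} (r : X → X → Prop) (K : ℕ) (S : Set X) : Prop :=
  ∃ C : Fin K → Set X, (∀ i, IsRConvex r (C i)) ∧ S = ⋃ i, C i

theorem stmt_8 {M : Type*} {I : Type*} [Uncountable I] (A : I → Set M)
    (hind : ∀ s t : Finset I, Disjoint s t →
      ((⋂ i ∈ s, A i) ∩ ⋂ j ∈ t, (A j)ᶜ).Nonempty) :
    ¬ ∃ (r : M → M → Prop) (N : I → ℕ), IsStrictTotalOrder M r ∧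
        ∀ i, UnionOfAtMostConvex r (N i) (A i) := by
  classical
  rintro ⟨r, N, hsto, hconv⟩
  haveI := hsto
  haveI : DecidableRel r := fun a b => Classical.dec _
  letI : LinearOrder M := linearOrderOfSTO r
  have hlt : ∀ a b : M, a < b ↔ r a b := fun a b => Iff.rfl
  -- find a fiber of N that is infinite
  obtain ⟨K, hK⟩ : ∃ K, (N ⁻¹' {K}).Infinite := by
    by_contra h
    push_neg at h
    have huniv : (Set.univ : Set I) = ⋃ K, N ⁻¹' {K} := by
      ext i; simp
    have hc : (Set.univ : Set I).Countable := by
      rw [huniv]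
      exact Set.countable_iUnion fun K => (h K).countable
    exact not_countable (Set.countable_univ_iff.mp hc)
  -- choose n with 2*K*n + 1 < 2^n
  set n : ℕ := 2 * K + 11 with hn_def
  have hpow : 2 * K * n + 1 < 2 ^ n := by
    have h1 : K + 1 ≤ 2 ^ K := Nat.succ_le_of_lt (Nat.lt_two_pow_self (n := K))
    have h2 : (2 : ℕ) ^ n = 2 ^ K * 2 ^ K * 2048 := by
      rw [hn_def, pow_add, two_mul, pow_add]; ring
    rw [h2]; nlinarith
  obtain ⟨s, hs_sub, hs_card⟩ := hK.exists_subset_card_eq n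
  have hNs : ∀ i ∈ s, N i = K := fun i hi => hs_sub hi
  -- points realizing all patterns on s
  have hx : ∀ T : Finset I, ∃ y : M, (∀ i ∈ T, y ∈ A i) ∧ ∀ i ∈ s \ T, y ∉ A i := by
    intro T
    obtain ⟨y, hy⟩ := hind T (s \ T) Finset.disjoint_sdiff
    simp only [Set.mem_inter_iff, Set.mem_iInter, Set.mem_compl_iff] at hy
    exact ⟨y, hy.1, hy.2⟩
  choose x hx1 hx2 using hx
  have hxinj : Set.InjOn x ↑s.powerset := by
    intro T hT T' hT' hxx
    simp only [Finset.coe_powerset, Set.mem_preimage, Set.mem_powerset_iff,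
      Finset.coe_subset] at hT hT'
    by_contra hne
    obtain ⟨i, hi⟩ : ∃ i, ¬(i ∈ T ↔ i ∈ T') := by
      by_contra h; push_neg at h; exact hne (Finset.ext fun i => h i)
    have hi' := not_iff.mp hi
    by_cases h1 : i ∈ T
    · have h2 : i ∉ T' := fun h => (hi'.mpr h) h1
      exact hx2 T' i (Finset.mem_sdiff.mpr ⟨hT h1, h2⟩) (hxx ▸ hx1 T i h1)
    · have h2 : i ∈ T' := hi'.mp h1
      exact hx2 T i (Finset.mem_sdiff.mpr ⟨hT' h2, h1⟩) (hxx ▸ hx1 T' i h2)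
  set Lm : ℕ := 2 ^ n - 1 with hLm_def
  have hL : 2 ^ n = Lm + 1 := by
    have : 1 ≤ 2 ^ n := Nat.one_le_two_pow
    omega
  set P : Finset M := s.powerset.image x with hP_def
  have hPcard : P.card = Lm + 1 := by
    rw [hP_def, Finset.card_image_of_injOn hxinj, Finset.card_powerset, hs_card, hL]
  set p : Fin (Lm + 1) → M := fun j => ((P.orderIsoOfFin hPcard) j : M) with hp_def
  have hpmono : StrictMono p := by
    intro a b hab
    exact Subtype.coe_lt_coe.mpr ((P.orderIsoOfFin hPcard).strictMono hab)
  have hpP : ∀ j, p j ∈ P := fun j => ((P.orderIsoOfFin hPcard) j).2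
  have hT : ∀ j, ∃ T ∈ s.powerset, x T = p j := fun j => Finset.mem_image.mp (hpP j)
  choose T hT1 hT2 using hT
  -- the change sets
  set D : I → Finset (Fin Lm) := fun i =>
    Finset.univ.filter (fun j : Fin Lm => ¬((p j.castSucc ∈ A i) ↔ (p j.succ ∈ A i))) with hD_def
  -- every adjacent pair changes in some A i, i ∈ s
  have hcover : ∀ j : Fin Lm, ∃ i ∈ s, ¬((p j.castSucc ∈ A i) ↔ (p j.succ ∈ A i)) := by
    intro j
    have hne : p j.castSucc ≠ p j.succ := ne_of_lt (hpmono (Fin.castSucc_lt_succ (i := j)))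
    have hTne : T j.castSucc ≠ T j.succ := by
      intro h
      exact hne (by rw [← hT2 j.castSucc, ← hT2 j.succ, h])
    obtain ⟨i, hi⟩ : ∃ i, ¬(i ∈ T j.castSucc ↔ i ∈ T j.succ) := by
      by_contra h; push_neg at h; exact hTne (Finset.ext fun i => h i)
    have hsub1 : T j.castSucc ⊆ s := Finset.mem_powerset.mp (hT1 j.castSucc)
    have hsub2 : T j.succ ⊆ s := Finset.mem_powerset.mp (hT1 j.succ)
    have hi' := not_iff.mp hi
    by_cases h1 : i ∈ T j.castSucc
    · have h2 : i ∉ T j.succ := fun h => (hi'.mpr h) h1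
      refine ⟨i, hsub1 h1, ?_⟩
      rw [← hT2 j.castSucc, ← hT2 j.succ]
      have ha : x (T j.castSucc) ∈ A i := hx1 _ i h1
      have hb : x (T j.succ) ∉ A i := hx2 _ i (Finset.mem_sdiff.mpr ⟨hsub1 h1, h2⟩)
      exact fun h => hb (h.mp ha)
    · have h2 : i ∈ T j.succ := hi'.mp h1
      refine ⟨i, hsub2 h2, ?_⟩
      rw [← hT2 j.castSucc, ← hT2 j.succ]
      have ha : x (T j.succ) ∈ A i := hx1 _ i h2
      have hb : x (T j.castSucc) ∉ A i :=
        hx2 _ i (Finset.mem_sdiff.mpr ⟨hsub2 h2, h1⟩)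
      exact fun h => hb (h.mpr ha)
  -- each change set is small
  have hDle : ∀ i ∈ s, (D i).card ≤ 2 * K := by
    intro i hi
    obtain ⟨C, hCconv, hCA⟩ := hconv i
    have hmemA : ∀ (m : Fin (N i)) (z : M), z ∈ C m → z ∈ A i := by
      intro m z hz; rw [hCA]; exact Set.mem_iUnion.mpr ⟨m, hz⟩
    have hconvex : ∀ (m : Fin (N i)) (a b c : M), a < b → b < c →
        a ∈ C m → c ∈ C m → b ∈ C m := by
      intro m a b c hab hbc
      exact hCconv m a b c ((hlt a b).mp hab) ((hlt b c).mp hbc)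
    set Din : Finset (Fin Lm) :=
      Finset.univ.filter (fun j : Fin Lm => p j.castSucc ∉ A i ∧ p j.succ ∈ A i) with hDin_def
    set Dout : Finset (Fin Lm) :=
      Finset.univ.filter (fun j : Fin Lm => p j.castSucc ∈ A i ∧ p j.succ ∉ A i) with hDout_def
    have hsplit : D i ⊆ Din ∪ Dout := by
      intro j hj
      simp only [hD_def, hDin_def, hDout_def, Finset.mem_filter, Finset.mem_union,
        Finset.mem_univ, true_and] at hj ⊢
      rcases Classical.em (p j.castSucc ∈ A i) with hP | hP
      · exact Or.inr ⟨hP, fun hQ => hj ⟨fun _ => hQ, fun _ => hP⟩⟩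
      · exact Or.inl ⟨hP, Classical.byContradiction fun hQ =>
          hj ⟨fun hp => absurd hp hP, fun hq => absurd hq hQ⟩⟩
    have hfin : ∀ j : Fin Lm, p j.succ ∈ A i → ∃ m : Fin (N i), p j.succ ∈ C m := by
      intro j hj; rw [hCA] at hj; exact Set.mem_iUnion.mp hj
    have hfout : ∀ j : Fin Lm, p j.castSucc ∈ A i → ∃ m : Fin (N i), p j.castSucc ∈ C m := by
      intro j hj; rw [hCA] at hj; exact Set.mem_iUnion.mp hj
    have hinle : Din.card ≤ N i := by
      set f : Fin Lm → ℕ := fun j =>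
        if h : ∃ m : Fin (N i), p j.succ ∈ C m then (h.choose : ℕ) else 0 with hf_def
      have hmaps : ∀ j ∈ Din, f j ∈ Finset.range (N i) := by
        intro j hj
        simp only [hDin_def, Finset.mem_filter, Finset.mem_univ, true_and] at hj
        have h := hfin j hj.2
        simp only [hf_def, dif_pos h]
        exact Finset.mem_range.mpr h.choose.2
      have hkey : ∀ j j' : Fin Lm, j ∈ Din → j' ∈ Din → j < j' → f j ≠ f j' := by
        intro j j' hj hj' hjj hff
        simp only [hDin_def, Finset.mem_filter, Finset.mem_univ, true_and] at hj hj'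
        have h := hfin j hj.2
        have h' := hfin j' hj'.2
        simp only [hf_def, dif_pos h, dif_pos h'] at hff
        have hmm : h.choose = h'.choose := Fin.ext hff
        set m := h.choose with hm_def
        have hm1 : p j.succ ∈ C m := h.choose_spec
        have hm2 : p j'.succ ∈ C m := hmm ▸ h'.choose_spec
        have hle : (j.succ : Fin (Lm + 1)) ≤ j'.castSucc := by
          have : (j : ℕ) < (j' : ℕ) := hjj
          exact Fin.le_def.mpr (by simp [Fin.val_succ]; omega)
        rcases lt_or_eq_of_le hle with hlt' | heq
        · have hb : p j.succ < p j'.castSucc := hpmono hlt'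
          have hc : p j'.castSucc < p j'.succ := hpmono (Fin.castSucc_lt_succ (i := j'))
          exact hj'.1 (hmemA m _ (hconvex m _ _ _ hb hc hm1 hm2))
        · exact hj'.1 (hmemA m _ (heq ▸ hm1))
      have hinj : Set.InjOn f ↑Din := by
        intro j hj j' hj' hff
        rcases lt_trichotomy j j' with h | h | h
        · exact absurd hff (hkey j j' hj hj' h)
        · exact h
        · exact absurd hff.symm (hkey j' j hj' hj h)
      calc Din.card ≤ (Finset.range (N i)).card :=
            Finset.card_le_card_of_injOn f hmaps hinj
        _ = N i := Finset.card_range _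
    have houtle : Dout.card ≤ N i := by
      set f : Fin Lm → ℕ := fun j =>
        if h : ∃ m : Fin (N i), p j.castSucc ∈ C m then (h.choose : ℕ) else 0 with hf_def
      have hmaps : ∀ j ∈ Dout, f j ∈ Finset.range (N i) := by
        intro j hj
        simp only [hDout_def, Finset.mem_filter, Finset.mem_univ, true_and] at hj
        have h := hfout j hj.1
        simp only [hf_def, dif_pos h]
        exact Finset.mem_range.mpr h.choose.2
      have hkey : ∀ j j' : Fin Lm, j ∈ Dout → j' ∈ Dout → j < j' → f j ≠ f j' := by
        intro j j' hj hj' hjj hff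
        simp only [hDout_def, Finset.mem_filter, Finset.mem_univ, true_and] at hj hj'
        have h := hfout j hj.1
        have h' := hfout j' hj'.1
        simp only [hf_def, dif_pos h, dif_pos h'] at hff
        have hmm : h.choose = h'.choose := Fin.ext hff
        set m := h.choose with hm_def
        have hm1 : p j.castSucc ∈ C m := h.choose_spec
        have hm2 : p j'.castSucc ∈ C m := hmm ▸ h'.choose_spec
        have hle : (j.succ : Fin (Lm + 1)) ≤ j'.castSucc := by
          have : (j : ℕ) < (j' : ℕ) := hjj
          exact Fin.le_def.mpr (by simp [Fin.val_succ]; omega)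
        rcases lt_or_eq_of_le hle with hlt' | heq
        · have ha : p j.castSucc < p j.succ := hpmono (Fin.castSucc_lt_succ (i := j))
          have hb : p j.succ < p j'.castSucc := hpmono hlt'
          exact hj.2 (hmemA m _ (hconvex m _ _ _ ha hb hm1 hm2))
        · exact hj.2 (hmemA m _ (heq ▸ hm2))
      have hinj : Set.InjOn f ↑Dout := by
        intro j hj j' hj' hff
        rcases lt_trichotomy j j' with h | h | h
        · exact absurd hff (hkey j j' hj hj' h)
        · exact h
        · exact absurd hff.symm (hkey j' j hj' hj h)
      calc Dout.card ≤ (Finset.range (N i)).card :=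
            Finset.card_le_card_of_injOn f hmaps hinj
        _ = N i := Finset.card_range _
    calc (D i).card ≤ (Din ∪ Dout).card := Finset.card_le_card hsplit
      _ ≤ Din.card + Dout.card := Finset.card_union_le _ _
      _ ≤ N i + N i := Nat.add_le_add hinle houtle
      _ = 2 * K := by rw [hNs i hi]; ring
  -- assemble
  have hsubU : (Finset.univ : Finset (Fin Lm)) ⊆ s.biUnion D := by
    intro j _
    obtain ⟨i, hi, hni⟩ := hcover j
    exact Finset.mem_biUnion.mpr ⟨i, hi, by
      simp only [hD_def, Finset.mem_filter, Finset.mem_univ, true_and]; exact hni⟩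
  have hfinal : Lm ≤ n * (2 * K) := by
    calc Lm = (Finset.univ : Finset (Fin Lm)).card := by
            rw [Finset.card_univ, Fintype.card_fin]
      _ ≤ (s.biUnion D).card := Finset.card_le_card hsubU
      _ ≤ ∑ i ∈ s, (D i).card := Finset.card_biUnion_le
      _ ≤ ∑ i ∈ s, 2 * K := Finset.sum_le_sum hDle
      _ = n * (2 * K) := by rw [Finset.sum_const, smul_eq_mul, hs_card]
  have : 2 * K * n < Lm := by omega
  have : n * (2 * K) = 2 * K * n := by ring
  omega
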